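/- Fix integers 0 ≤ r < S, λ > 0 and ν_0,…,ν_r > 0. Let K := {0,1,…,S} with K_B := {0} and K_W := {1,…,S}, let V be the K×K matrix with v(k,S) = ν_k and v(k,k) = −ν_k for 0 ≤ k ≤ r and all other entries 0, and let R be the stochastic matrix with R(0,0) = 1, R(k,k−1) = 1 for 1 ≤ k ≤ S, and all other entries 0. Then λ·I_W − V is invertible, and the row vector θ̂ defined by θ̂(k) := ∏_{i=1}^{min(k,r)} (λ+ν_i)/λ for 0 ≤ k ≤ S−1 and θ̂(S) := 0 satisfies θ̂ · λ·(λ·I_W − V)^{-1}·I_W·R = θ̂. (After normalization, θ̂ is the stationary environment marginal of the Markov chain embedded at departure epochs in the M/M/1 queueing-inventory system under (r,S)-policy with lost sales and inventory-dependent replenishment rates ν_k.) -/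

import Mathlib

open Finset Matrix

private lemma vecMul_smul_aux {n : ℕ} (v : Fin n → ℝ) (a : ℝ)
    (M : Matrix (Fin n) (Fin n) ℝ) :
    Matrix.vecMul v (a • M) = a • Matrix.vecMul v M := by
  funext j
  simp [Matrix.vecMul, dotProduct, Finset.mul_sum, mul_left_comm]

/-- For the M/M/1 queueing-inventory system under (r,S)-policy with lost
sales and inventory-dependent replenishment rates, λ·I_W − V is invertible and the
explicit vector θ̂ is a fixed point of λ·(λ·I_W − V)⁻¹·I_W·R (environment marginal of
the embedded chain at departure epochs). -/
theorem stmt_13 (r S : ℕ) (hrS : r < S)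
    (lam : ℝ) (hlam : 0 < lam)
    (nu : ℕ → ℝ) (hnu : ∀ i, i ≤ r → 0 < nu i)
    (V R : Matrix (Fin (S + 1)) (Fin (S + 1)) ℝ)
    (hV1 : ∀ k m : Fin (S + 1), (k : ℕ) ≤ r → (m : ℕ) = S → V k m = nu k)
    (hV2 : ∀ k : Fin (S + 1), (k : ℕ) ≤ r → V k k = -nu k)
    (hV3 : ∀ k m : Fin (S + 1), (k : ℕ) ≤ r → m ≠ k → (m : ℕ) ≠ S → V k m = 0)
    (hV4 : ∀ k m : Fin (S + 1), r < (k : ℕ) → V k m = 0)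
    (hR1 : ∀ k m : Fin (S + 1), (k : ℕ) = 0 → (m : ℕ) = 0 → R k m = 1)
    (hR2 : ∀ k m : Fin (S + 1), (m : ℕ) + 1 = (k : ℕ) → R k m = 1)
    (hR3 : ∀ k m : Fin (S + 1), ¬((k : ℕ) = 0 ∧ (m : ℕ) = 0) →
      (m : ℕ) + 1 ≠ (k : ℕ) → R k m = 0)
    (IW : Matrix (Fin (S + 1)) (Fin (S + 1)) ℝ)
    (hIW : IW = Matrix.diagonal (fun k : Fin (S + 1) =>
      if (k : ℕ) = 0 then (0:ℝ) else 1))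
    (θhat : Fin (S + 1) → ℝ)
    (hθhat : ∀ k : Fin (S + 1), (k : ℕ) < S →
      θhat k = ∏ i ∈ Finset.Icc 1 (min (k : ℕ) r), (lam + nu i) / lam)
    (hθhatS : ∀ k : Fin (S + 1), (k : ℕ) = S → θhat k = 0) :
    IsUnit (lam • IW - V) ∧
    Matrix.vecMul θhat (lam • ((lam • IW - V)⁻¹ * IW * R)) = θhat := by
  have hlam' : lam ≠ 0 := ne_of_gt hlam
  set A : Matrix (Fin (S + 1)) (Fin (S + 1)) ℝ := lam • IW - V with hAdef
  set P : ℕ → ℝ := fun n => ∏ i ∈ Finset.Icc 1 (min n r), (lam + nu i) / lam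
    with hPdef
  have hθP : ∀ k : Fin (S + 1), (k : ℕ) < S → θhat k = P (k : ℕ) := by
    intro k h; rw [hPdef]; exact hθhat k h
  have hP0 : P 0 = 1 := by
    rw [hPdef]; simp
  have hPstep : ∀ n : ℕ, 1 ≤ n → n ≤ r → P n = P (n - 1) * ((lam + nu n) / lam) := by
    intro n h1 h2
    obtain ⟨b, rfl⟩ : ∃ b, n = b + 1 := ⟨n - 1, by omega⟩
    rw [hPdef]
    simp only [Nat.add_sub_cancel]
    rw [min_eq_left h2, min_eq_left (by omega : b ≤ r),
      Finset.prod_Icc_succ_top (by omega : 1 ≤ b + 1)]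
  have hPconst : ∀ n : ℕ, r ≤ n → P n = P r := by
    intro n h; rw [hPdef]; simp only [min_eq_right h, min_self]
  -- entries of A
  have hAentry : ∀ k m : Fin (S + 1),
      A k m = lam * (if k = m then (if (k : ℕ) = 0 then 0 else 1) else 0) - V k m := by
    intro k m
    rw [hAdef, hIW]
    simp [Matrix.sub_apply, Matrix.diagonal_apply]
  have hAdiag : ∀ k : Fin (S + 1),
      A k k = (if (k : ℕ) = 0 then nu 0 else if (k : ℕ) ≤ r then lam + nu (k : ℕ)
        else lam) := by
    intro k
    rw [hAentry]
    by_cases hk0 : (k : ℕ) = 0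
    · rw [hV2 k (by omega), hk0]
      simp [hk0]
    · by_cases hkr : (k : ℕ) ≤ r
      · rw [hV2 k hkr]
        simp [hk0, hkr]
      · rw [hV4 k k (by omega)]
        simp [hk0, hkr]
  have hAoff : ∀ k m : Fin (S + 1), m ≠ k → (m : ℕ) ≠ S → A k m = 0 := by
    intro k m hmk hmS
    rw [hAentry, if_neg (fun h => hmk h.symm)]
    by_cases hkr : (k : ℕ) ≤ r
    · rw [hV3 k m hkr hmk hmS]; ring
    · rw [hV4 k m (by omega)]; ring
  have hAcolS : ∀ k m : Fin (S + 1), (m : ℕ) = S → (k : ℕ) ≠ S →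
      A k m = -(if (k : ℕ) ≤ r then nu (k : ℕ) else 0) := by
    intro k m hmS hkS
    have hkm : ¬ k = m := fun h => hkS (h ▸ hmS)
    rw [hAentry, if_neg hkm]
    by_cases hkr : (k : ℕ) ≤ r
    · rw [hV1 k m hkr hmS]; simp [hkr]
    · rw [hV4 k m (by omega)]; simp [hkr]
  -- invertibility
  have hdiag_ne : ∀ k : Fin (S + 1), A k k ≠ 0 := by
    intro k
    rw [hAdiag]
    by_cases hk0 : (k : ℕ) = 0
    · simp [hk0]; exact ne_of_gt (hnu 0 (by omega))
    · by_cases hkr : (k : ℕ) ≤ r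
      · simp [hk0, hkr]
        have := hnu (k : ℕ) hkr
        nlinarith
      · simp [hk0, hkr]
        exact hlam'
  have hBT : A.BlockTriangular id := by
    intro i j hij
    apply hAoff
    · exact fun h => absurd (congrArg (Fin.val) h) (by simp at hij ⊢; omega)
    · have : (j : ℕ) < (i : ℕ) := hij
      have := i.isLt
      omega
  have hdetA : A.det ≠ 0 := by
    rw [Matrix.det_of_upperTriangular hBT]
    exact Finset.prod_ne_zero_iff.mpr (fun k _ => hdiag_ne k)
  have hUnitDet : IsUnit A.det := isUnit_iff_ne_zero.mpr hdetA
  have hUnit : IsUnit A := (Matrix.isUnit_iff_isUnit_det A).mpr hUnitDet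
  refine ⟨hUnit, ?_⟩
  -- the explicit left preimage x with x ⬝ A = θhat
  set x : Fin (S + 1) → ℝ := fun k =>
    if (k : ℕ) = 0 then (nu 0)⁻¹ else P ((k : ℕ) - 1) / lam with hxdef
  have hxA : Matrix.vecMul x A = θhat := by
    funext m
    show ∑ k, x k * A k m = θhat m
    by_cases hmS : (m : ℕ) = S
    · -- last column
      rw [hθhatS m hmS]
      set g : ℕ → ℝ := fun n =>
        if n = 0 then -1 else if n ≤ r then P (n - 1) - P n
        else if n < S then 0 else P r with hgdef
      have hterm : ∀ k : Fin (S + 1), x k * A k m = g (k : ℕ) := by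
        intro k
        by_cases hkS : (k : ℕ) = S
        · have hkm : k = m := Fin.ext (by omega)
          rw [hkm, hAdiag m, hgdef, hxdef]
          simp only [hmS, hkS]
          rw [if_neg (by omega), if_neg (by omega), if_neg (by omega),
            if_neg (by omega), if_neg (by omega), if_neg (by omega)]
          rw [div_mul_cancel₀ _ hlam', hPconst (S - 1) (by omega)]
        · rw [hAcolS k m hmS hkS]
          simp only [hxdef, hgdef]
          have hkS' : (k : ℕ) ≤ S := by omega
          split_ifs with h1 h2 h3 h4
          · rw [h1, mul_neg, inv_mul_cancel₀ (ne_of_gt (hnu 0 (by omega)))]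
          · omega
          · rw [hPstep (k : ℕ) (by omega) h3]
            field_simp
            ring
          · ring
          · omega
      calc ∑ k, x k * A k m = ∑ k : Fin (S + 1), g (k : ℕ) :=
            Finset.sum_congr rfl (fun k _ => hterm k)
        _ = ∑ n ∈ Finset.range (S + 1), g n := by
            rw [Fin.sum_univ_eq_sum_range]
        _ = 0 := by
            rw [Finset.sum_range_succ]
            have hgS : g S = P r := by
              simp only [hgdef]
              rw [if_neg (by omega), if_neg (by omega), if_neg (by omega)]
            have hsplit : ∑ n ∈ Finset.range S, g n
                = ∑ n ∈ Finset.range (r + 1), g n + ∑ n ∈ Finset.Ico (r + 1) S, g n := by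
              rw [Finset.range_eq_Ico, ← Finset.sum_Ico_consecutive g
                (Nat.zero_le (r + 1)) (by omega : r + 1 ≤ S), Finset.range_eq_Ico]
            have hmid : ∑ n ∈ Finset.Ico (r + 1) S, g n = 0 := by
              apply Finset.sum_eq_zero
              intro n hn
              rw [Finset.mem_Ico] at hn
              simp only [hgdef]
              rw [if_neg (by omega), if_neg (by omega), if_pos (by omega)]
            have hfirst : ∑ n ∈ Finset.range (r + 1), g n = P 0 - P r + (-1) := by
              rw [Finset.sum_range_succ']
              have h1 : ∀ i ∈ Finset.range r, g (i + 1) = P i - P (i + 1) := by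
                intro i hi
                rw [Finset.mem_range] at hi
                simp only [hgdef]
                rw [if_neg (by omega), if_pos (by omega), Nat.add_sub_cancel]
              rw [Finset.sum_congr rfl h1, Finset.sum_range_sub' P r]
              have hg0 : g 0 = -1 := by simp [hgdef]
              rw [hg0]
            rw [hsplit, hmid, hfirst, hgS, hP0]
            ring
    · -- diagonal column
      have hAm := hAdiag m
      rw [Finset.sum_eq_single m]
      · rw [hθP m (by omega), hAm]
        simp only [hxdef]
        split_ifs with h1 h2
        · rw [h1, hP0, inv_mul_cancel₀ (ne_of_gt (hnu 0 (by omega)))]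
        · rw [hPstep (m : ℕ) (by omega) h2]
          field_simp
        · rw [div_mul_cancel₀ _ hlam', hPconst ((m : ℕ) - 1) (by omega),
            hPconst (m : ℕ) (by omega)]
      · intro k _ hk
        rw [hAoff k m (fun h => hk h.symm) hmS]
        ring
      · intro h
        exact absurd (Finset.mem_univ m) h
  -- conclude
  have hAAinv : A * A⁻¹ = 1 := Matrix.mul_nonsing_inv A hUnitDet
  have hθAinv : Matrix.vecMul θhat A⁻¹ = x := by
    rw [← hxA, Matrix.vecMul_vecMul, hAAinv, Matrix.vecMul_one]
  rw [vecMul_smul_aux, Matrix.mul_assoc, ← Matrix.vecMul_vecMul, hθAinv,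
    ← Matrix.vecMul_vecMul]
  -- compute y = x ⬝ IW
  have hy : Matrix.vecMul x IW = fun k : Fin (S + 1) =>
      if (k : ℕ) = 0 then 0 else P ((k : ℕ) - 1) / lam := by
    funext k
    rw [hIW, Matrix.vecMul_diagonal, hxdef]
    by_cases hk0 : (k : ℕ) = 0 <;> simp [hk0]
  rw [hy]
  funext m
  set y : Fin (S + 1) → ℝ := fun k : Fin (S + 1) =>
    if (k : ℕ) = 0 then 0 else P ((k : ℕ) - 1) / lam with hydef
  show lam * ∑ k, y k * R k m = θhat m
  by_cases hmS : (m : ℕ) = S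
  · rw [hθhatS m hmS]
    have : ∀ k : Fin (S + 1), y k * R k m = 0 := by
      intro k
      by_cases hk0 : (k : ℕ) = 0
      · simp [hydef, hk0, show k = 0 from Fin.ext (by simp [hk0])]
      · rw [hR3 k m (fun h => hk0 h.1) (by have := k.isLt; omega)]
        ring
    rw [Finset.sum_congr rfl (fun k _ => this k)]
    simp
  · have hm1 : (m : ℕ) + 1 < S + 1 := by omega
    rw [Finset.sum_eq_single (⟨(m : ℕ) + 1, hm1⟩ : Fin (S + 1))]
    · rw [hR2 _ m (by simp)]
      simp only [hydef]
      rw [if_neg (by simp : ¬((⟨(m : ℕ) + 1, hm1⟩ : Fin (S + 1)) : ℕ) = 0)]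
      simp only [Nat.add_sub_cancel]
      rw [mul_one, hθP m (by omega)]
      field_simp
    · intro k _ hk
      by_cases hk0 : (k : ℕ) = 0
      · simp [hydef, hk0, show k = 0 from Fin.ext (by simp [hk0])]
      · rw [hR3 k m (fun h => hk0 h.1)
          (fun h => hk (Fin.ext (by simpa using h.symm)))]
        ring
    · intro h
      exact absurd (Finset.mem_univ _) h
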